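/- Let a > 1 and β > 0 be real numbers. Then for every y > a, (y^{β/(β+1)} − 1)^{β+1} · (y − a)^{−β} ≥ (a^β − 1)/a^β, and equality holds at y = a^{β+1}; that is, the function h(y) = (y^{β/(β+1)} − 1)^{β+1} (y − a)^{−β} attains its minimum on (a, ∞) at y = a^{β+1}, with minimum value (a^β − 1)/a^β. -/

import Mathlib

/-- Minimization of Section IV.B: for `a > 1`, `β > 0`, the function
`h(y) = (y^(β/(β+1)) - 1)^(β+1) (y - a)^(-β)` on `(a,∞)` is bounded below by
`(a^β - 1)/a^β`, and this value is attained at `y = a^(β+1)`. -/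
theorem grid_cost_min
    (a β : ℝ) (ha : 1 < a) (hβ : 0 < β) :
    (∀ y : ℝ, a < y →
      (y ^ (β / (β + 1)) - 1) ^ (β + 1) * (y - a) ^ (-β) ≥ (a ^ β - 1) / a ^ β) ∧
    ((a ^ (β + 1)) ^ (β / (β + 1)) - 1) ^ (β + 1) * (a ^ (β + 1) - a) ^ (-β) =
      (a ^ β - 1) / a ^ β := by
  have ha0 : (0:ℝ) < a := lt_trans one_pos ha
  have hβ1 : (0:ℝ) < β + 1 := by linarith
  have haβ : 1 < a ^ β :=
    (Real.one_lt_rpow_iff_of_pos ha0).mpr (Or.inl ⟨ha, hβ⟩)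
  have haβ0 : (0:ℝ) < a ^ β := lt_trans one_pos haβ
  have hw₂pos : 0 < (a ^ β - 1) / a ^ β := div_pos (by linarith) haβ0
  have hw₂lt : (a ^ β - 1) / a ^ β < 1 := (div_lt_one haβ0).mpr (by linarith)
  set w₂ : ℝ := (a ^ β - 1) / a ^ β with hw₂def
  constructor
  · intro y hy
    have hy1 : 1 < y := lt_trans ha hy
    have hy0 : (0:ℝ) < y := lt_trans one_pos hy1
    have hya : (0:ℝ) < y - a := by linarith
    have hexp : 0 < β / (β + 1) := div_pos hβ hβ1
    set s : ℝ := y ^ (β / (β + 1)) with hsdef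
    have hs1 : 1 < s :=
      (Real.one_lt_rpow_iff_of_pos hy0).mpr (Or.inl ⟨hy1, hexp⟩)
    have hs0 : (0:ℝ) < s - 1 := by linarith
    set p : ℝ := (β + 1) / β with hpdef
    have hp1 : 1 ≤ p := by
      rw [hpdef, le_div_iff₀ hβ]; linarith
    have hβne : β ≠ 0 := ne_of_gt hβ
    have hβ1ne : β + 1 ≠ 0 := ne_of_gt hβ1
    -- weights
    set w₁ : ℝ := (a ^ β)⁻¹ with hw₁def
    have hw₁pos : 0 < w₁ := inv_pos.mpr haβ0
    have hwsum : w₁ + w₂ = 1 := by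
      rw [hw₁def, hw₂def]; field_simp; ring
    -- convexity of x ↦ x ^ p
    have key := (convexOn_rpow hp1).2 (x := a ^ β) (Set.mem_Ici.mpr haβ0.le)
      (y := (s - 1) / w₂) (Set.mem_Ici.mpr (div_nonneg hs0.le hw₂pos.le))
      hw₁pos.le hw₂pos.le hwsum
    simp only [smul_eq_mul] at key
    have e1 : w₁ * a ^ β = 1 := by rw [hw₁def]; field_simp
    have e2 : w₂ * ((s - 1) / w₂) = s - 1 := by field_simp
    rw [e1, e2] at key
    have e3 : (1 + (s - 1) : ℝ) = s := by ring
    rw [e3] at key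
    -- simplify left side: s ^ p = y
    have e4 : s ^ p = y := by
      rw [hsdef, ← Real.rpow_mul hy0.le,
        show β / (β + 1) * p = 1 by rw [hpdef]; field_simp, Real.rpow_one]
    -- simplify first term on right: w₁ * (a^β)^p = a
    have e5 : w₁ * (a ^ β) ^ p = a := by
      rw [hw₁def, ← Real.rpow_mul ha0.le, ← Real.rpow_neg ha0.le,
        ← Real.rpow_add ha0]
      rw [show -β + β * p = 1 by rw [hpdef]; field_simp; ring]
      exact Real.rpow_one a
    -- second term
    have e6 : w₂ * ((s - 1) / w₂) ^ p = w₂ ^ (1 - p) * (s - 1) ^ p := by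
      rw [Real.div_rpow hs0.le hw₂pos.le, Real.rpow_sub hw₂pos,
        Real.rpow_one]
      field_simp [ne_of_gt (Real.rpow_pos_of_pos hw₂pos p)]
    rw [e4, e5, e6] at key
    -- so y - a ≤ w₂ ^ (1 - p) * (s - 1) ^ p
    have key2 : y - a ≤ w₂ ^ (1 - p) * (s - 1) ^ p := by linarith
    -- raise to power β
    have key3 : (y - a) ^ β ≤ w₂⁻¹ * (s - 1) ^ (β + 1) := by
      have h0 : (0:ℝ) ≤ w₂ ^ (1 - p) * (s - 1) ^ p :=
        mul_nonneg (Real.rpow_nonneg hw₂pos.le _) (Real.rpow_nonneg hs0.le _)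
      have h1 := Real.rpow_le_rpow hya.le key2 hβ.le
      rw [Real.mul_rpow (Real.rpow_nonneg hw₂pos.le _) (Real.rpow_nonneg hs0.le _),
        ← Real.rpow_mul hw₂pos.le, ← Real.rpow_mul hs0.le] at h1
      rw [show (1 - p) * β = -1 by rw [hpdef]; field_simp; ring,
        show p * β = β + 1 by rw [hpdef]; field_simp] at h1
      rwa [Real.rpow_neg_one] at h1
    have hA : (0:ℝ) < (y - a) ^ β := Real.rpow_pos_of_pos hya β
    rw [ge_iff_le, Real.rpow_neg hya.le, ← div_eq_mul_inv, le_div_iff₀ hA]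
    calc w₂ * (y - a) ^ β ≤ w₂ * (w₂⁻¹ * (s - 1) ^ (β + 1)) := by
          exact mul_le_mul_of_nonneg_left key3 hw₂pos.le
      _ = (s - 1) ^ (β + 1) := by field_simp
  · -- equality at y = a^(β+1)
    have e1 : (a ^ (β + 1)) ^ (β / (β + 1)) = a ^ β := by
      rw [← Real.rpow_mul ha0.le,
        show (β + 1) * (β / (β + 1)) = β by field_simp]
    have e2 : a ^ (β + 1) - a = a * (a ^ β - 1) := by
      rw [Real.rpow_add ha0, Real.rpow_one]; ring
    have hX : (0:ℝ) < a ^ β - 1 := by linarith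
    have hXβ : (0:ℝ) < (a ^ β - 1) ^ β := Real.rpow_pos_of_pos hX β
    rw [e1, e2, Real.mul_rpow ha0.le hX.le, Real.rpow_neg ha0.le,
      Real.rpow_neg hX.le, Real.rpow_add hX β 1, Real.rpow_one,
      show ((a ^ β - 1) ^ β * (a ^ β - 1)) * ((a ^ β)⁻¹ * ((a ^ β - 1) ^ β)⁻¹)
        = (a ^ β - 1) * ((a ^ β - 1) ^ β * ((a ^ β - 1) ^ β)⁻¹) * (a ^ β)⁻¹ from by ring,
      mul_inv_cancel₀ (ne_of_gt hXβ), mul_one, ← div_eq_mul_inv]
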